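/- Let 𝒢 be the class of continuous ℓ:(0,∞)→(0,∞) such that for each a>0, sup_{r>1} (∫_1^r ℓ(s)/s ds) exp(−(a/ℓ(r)) ∫_1^r ℓ(s)/s ds) < ∞. If ℓ ∈ 𝒢 and b > 0, then the function r ↦ ℓ(r^b) also belongs to 𝒢. -/

import Mathlib

open MeasureTheory

/-- The class 𝒢 of positive continuous functions satisfying the integral growth condition. -/
def memG (ℓ : ℝ → ℝ) : Prop :=
  ContinuousOn ℓ (Set.Ioi 0) ∧ (∀ r > 0, 0 < ℓ r) ∧
    ∀ a > 0, ∃ C > 0, ∀ r > 1,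
      (∫ s in (1:ℝ)..r, ℓ s / s) *
        Real.exp (-(a / ℓ r) * ∫ s in (1:ℝ)..r, ℓ s / s) ≤ C

lemma subst_rpow (ℓ : ℝ → ℝ) (hc : ContinuousOn ℓ (Set.Ioi 0)) {b r : ℝ}
    (hb : 0 < b) (hr : 1 < r) :
    (∫ s in (1:ℝ)..r, ℓ (s ^ b) / s) = (1 / b) * ∫ u in (1:ℝ)..r ^ b, ℓ u / u := by
  have huIcc : Set.uIcc (1:ℝ) r = Set.Icc 1 r := Set.uIcc_of_le hr.le
  have hS : (fun s => s ^ b) '' Set.uIcc (1:ℝ) r ⊆ Set.Ioi 0 := by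
    rintro u ⟨s, hs, rfl⟩
    rw [huIcc] at hs
    exact Set.mem_Ioi.mpr (Real.rpow_pos_of_pos (lt_of_lt_of_le one_pos hs.1) b)
  have key := intervalIntegral.integral_comp_smul_deriv'
      (f := fun s => s ^ b) (f' := fun s => b * s ^ (b - 1)) (g := fun u => ℓ u / u)
      (a := (1:ℝ)) (b := r) ?_ ?_ ?_
  · rw [Real.one_rpow] at key
    rw [← key, ← intervalIntegral.integral_const_mul]
    apply intervalIntegral.integral_congr
    intro s hs
    rw [huIcc] at hs
    have hs0 : (0:ℝ) < s := lt_of_lt_of_le one_pos hs.1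
    have hsb : s ^ b ≠ 0 := (Real.rpow_pos_of_pos hs0 b).ne'
    simp only [smul_eq_mul, Function.comp]
    have h1 : s ^ (b - 1) = s ^ b / s := by
      rw [Real.rpow_sub hs0, Real.rpow_one]
    rw [h1]
    field_simp [h1]
  · intro x hx
    rw [huIcc] at hx
    have hx0 : x ≠ 0 := (lt_of_lt_of_le one_pos hx.1).ne'
    simpa using (Real.hasDerivAt_rpow_const (p := b) (Or.inl hx0))
  · exact continuousOn_const.mul (continuousOn_id.rpow_const fun x hx =>
      Or.inl (by rw [huIcc] at hx; exact (lt_of_lt_of_le one_pos hx.1).ne'))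
  · exact ContinuousOn.div (hc.mono hS) (continuousOn_id.mono hS)
      (fun u hu => (Set.mem_Ioi.mp (hS hu)).ne')

lemma memG_rpow (ℓ : ℝ → ℝ) (h : memG ℓ) {b : ℝ} (hb : 0 < b) :
    memG (fun r => ℓ (r ^ b)) := by
  obtain ⟨hc, hpos, hgrow⟩ := h
  refine ⟨?_, ?_, ?_⟩
  · apply hc.comp (continuousOn_id.rpow_const fun x hx => Or.inl (Set.mem_Ioi.mp hx).ne')
    intro x hx
    exact Set.mem_Ioi.mpr (Real.rpow_pos_of_pos (Set.mem_Ioi.mp hx) b)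
  · intro r hr
    exact hpos _ (Real.rpow_pos_of_pos hr b)
  · intro a ha
    obtain ⟨C, hC, hCle⟩ := hgrow (a / b) (div_pos ha hb)
    refine ⟨C / b + 1, by positivity, ?_⟩
    intro r hr
    have hr0 : (0:ℝ) < r := lt_trans one_pos hr
    have hrb : 1 < r ^ b := Real.one_lt_rpow_iff_of_pos hr0 |>.2 (Or.inl ⟨hr, hb⟩)
    have hsub := subst_rpow ℓ hc hb hr
    simp only []
    rw [hsub]
    have hℓ := hpos _ (Real.rpow_pos_of_pos hr0 b)
    have key := hCle _ hrb
    set I := ∫ u in (1:ℝ)..r ^ b, ℓ u / u with hI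
    have heq : -(a / ℓ (r ^ b)) * (1 / b * I) = -(a / b / ℓ (r ^ b)) * I := by
      ring
    rw [heq]
    calc 1 / b * I * Real.exp (-(a / b / ℓ (r ^ b)) * I)
        = (1 / b) * (I * Real.exp (-(a / b / ℓ (r ^ b)) * I)) := by ring
      _ ≤ (1 / b) * C := mul_le_mul_of_nonneg_left key (by positivity)
      _ ≤ C / b + 1 := by rw [one_div, inv_mul_eq_div]; linarith

theorem stmt_9 (ℓ : ℝ → ℝ) (h : memG ℓ) :
    ∀ b > 0, memG (fun r => ℓ (r ^ b)) := by
  intro b hb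
  have : (fun r : ℝ => ℓ (r ^ b)) = fun r => ℓ (r ^ (b : ℝ)) := by
    funext r; rw [Real.rpow_natCast]
  rw [this]
  exact memG_rpow ℓ h (by exact_mod_cast hb)
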